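/- Let U be the Lucas sequence with parameters P, Q where Q = ±1, let k ≥ 2 and A ∈ ℤ \ {0}, and let n_1, …, n_r be pairwise coprime positive integers with all terms nonzero. If A·y^k = U_{n_1}·…·U_{n_r} for some integer y, then each U_{n_i} can be written as U_{n_i} = e_i·s_i^k where s_i ≥ 1, e_i is k-th-power-free (p^k ∤ e_i for all primes p), and every prime dividing e_i divides A. -/

import Mathlib

lemma lucas_add (P Q : ℤ) (U : ℕ → ℤ) (h0 : U 0 = 0) (h1 : U 1 = 1)
    (hrec : ∀ n, U (n + 2) = P * U (n + 1) + Q * U n) :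
    ∀ m nn, U (m + nn + 1) = U (m + 1) * U (nn + 1) + Q * (U m * U nn) := by
  intro m nn
  induction nn using Nat.strong_induction_on with
  | _ nn ih =>
    match nn with
    | 0 => simp [h0, h1]
    | 1 =>
      have hU2 : U 2 = P := by have := hrec 0; simp [h0, h1] at this; linarith
      have := hrec m
      rw [show m + 1 + 1 = m + 2 by omega, this, hU2, h1]; ring
    | (nn+2) =>
      have e1 := ih nn (by omega)
      have e2 := ih (nn+1) (by omega)
      have h3 := hrec (m + nn + 1)
      have h4 := hrec (nn + 1)
      rw [show m + (nn+2) + 1 = (m + nn + 1) + 2 by omega, h3,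
        show (m + nn + 1) + 1 = m + (nn + 1) + 1 by omega, e2, e1,
        show nn + 1 + 2 = nn + 2 + 1 by omega, h4,
        show nn + 1 + 1 = nn + 2 by omega, hrec nn]
      ring

lemma lucas_consec (P Q : ℤ) (hQ : Q = 1 ∨ Q = -1) (U : ℕ → ℤ) (h0 : U 0 = 0) (h1 : U 1 = 1)
    (hrec : ∀ n, U (n + 2) = P * U (n + 1) + Q * U n) :
    ∀ nn, IsCoprime (U nn) (U (nn + 1)) := by
  intro nn
  induction nn with
  | zero => rw [h1]; exact isCoprime_one_right
  | succ m ih =>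
    rw [hrec m]
    have h2 : IsCoprime (U (m+1)) (Q * U m) := by
      rcases hQ with h | h <;> subst h
      · simpa using ih.symm
      · simpa using ih.symm.neg_right
    have := h2.add_mul_left_right P
    convert this using 1
    · rfl
    · ring

lemma lucas_no_common_prime (P Q : ℤ) (hQ : Q = 1 ∨ Q = -1) (U : ℕ → ℤ)
    (h0 : U 0 = 0) (h1 : U 1 = 1)
    (hrec : ∀ n, U (n + 2) = P * U (n + 1) + Q * U n)
    (p : ℕ) (hp : p.Prime) :
    ∀ N a b, a + b ≤ N → 0 < a → 0 < b → Nat.Coprime a b →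
      (p : ℤ) ∣ U a → (p : ℤ) ∣ U b → False := by
  have hpz : Prime (p : ℤ) := Nat.prime_iff_prime_int.mp hp
  intro N
  induction N with
  | zero => intro a b h ha hb; omega
  | succ N ih =>
    intro a b hab ha hb hcop hda hdb
    -- handle a = 1 or b = 1
    rcases eq_or_lt_of_le (show 1 ≤ a from ha) with h1a | h1a
    · rw [← h1a, h1] at hda; exact hpz.not_isUnit (isUnit_of_dvd_one hda)
    rcases eq_or_lt_of_le (show 1 ≤ b from hb) with h1b | h1b
    · rw [← h1b, h1] at hdb; exact hpz.not_isUnit (isUnit_of_dvd_one hdb)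
    have main : ∀ a b : ℕ, a + b ≤ N + 1 → 1 < a → a < b → Nat.Coprime a b →
        (p : ℤ) ∣ U a → (p : ℤ) ∣ U b → False := by
      clear hab ha hb hcop hda hdb h1a h1b a b
      intro a b hab h1a hlt hcop hda hdb
      have hb' : b = (b - a) + (a - 1) + 1 := by omega
      have key := lucas_add P Q U h0 h1 hrec (b - a) (a - 1)
      rw [show a - 1 + 1 = a by omega] at key
      rw [hb', key] at hdb
      have hd2 : (p : ℤ) ∣ Q * (U (b - a) * U (a - 1)) := by
        have := dvd_sub hdb (Dvd.dvd.mul_left hda (U (b - a + 1)))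
        simpa using this
      have hdQ : ¬ (p : ℤ) ∣ Q := by
        rcases hQ with h | h <;> subst h
        · exact fun h => hpz.not_isUnit (isUnit_of_dvd_one h)
        · intro h; exact hpz.not_isUnit (isUnit_of_dvd_one ((dvd_neg).mp h))
      have hdprev : ¬ (p : ℤ) ∣ U (a - 1) := by
        intro hd
        have hcons := lucas_consec P Q hQ U h0 h1 hrec (a - 1)
        rw [show a - 1 + 1 = a by omega] at hcons
        exact hpz.not_isUnit (hcons.isUnit_of_dvd' hd hda)
      have hdba : (p : ℤ) ∣ U (b - a) := by
        rcases hpz.dvd_mul.mp hd2 with h | h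
        · exact absurd h hdQ
        · rcases hpz.dvd_mul.mp h with h | h
          · exact h
          · exact absurd h hdprev
      have hcop' : Nat.Coprime a (b - a) := by
        have := Nat.gcd_sub_self_right (le_of_lt hlt) (m := a) (n := b)
        unfold Nat.Coprime at *; omega
      exact ih a (b - a) (by omega) (by omega) (by omega) hcop' hda hdba
    rcases lt_trichotomy a b with hlt | heq | hgt
    · exact main a b hab h1a hlt hcop hda hdb
    · -- a = b, coprime so a = 1
      subst heq
      have : a = 1 := by
        have := Nat.Coprime.gcd_eq_one hcop
        rwa [Nat.gcd_self] at this
      omega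
    · -- b < a : symmetric
      exact main b a (by omega) h1b hgt hcop.symm hdb hda

lemma lucas_coprime_vals (P Q : ℤ) (hQ : Q = 1 ∨ Q = -1) (U : ℕ → ℤ)
    (h0 : U 0 = 0) (h1 : U 1 = 1)
    (hrec : ∀ n, U (n + 2) = P * U (n + 1) + Q * U n)
    (a b : ℕ) (ha : 0 < a) (hb : 0 < b) (hcop : Nat.Coprime a b)
    (hUa : U a ≠ 0) :
    IsCoprime (U a) (U b) := by
  rw [Int.isCoprime_iff_gcd_eq_one]
  by_contra h
  obtain ⟨p, hp, hpd⟩ := Nat.exists_prime_and_dvd h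
  have hda : (p : ℤ) ∣ U a := (Int.natCast_dvd_natCast.mpr (hpd.trans (Nat.gcd_dvd_left _ _))).trans (Int.natAbs_dvd.mpr dvd_rfl)
  have hdb : (p : ℤ) ∣ U b := (Int.natCast_dvd_natCast.mpr (hpd.trans (Nat.gcd_dvd_right _ _))).trans (Int.natAbs_dvd.mpr dvd_rfl)
  exact lucas_no_common_prime P Q hQ U h0 h1 hrec p hp (a + b) a b le_rfl ha hb hcop hda hdb

/-- every nonzero integer is (k-free) * (k-th power), with the k-free part dividing it -/
lemma kfree_decomp (k : ℕ) (hk : 2 ≤ k) :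
    ∀ N : ℕ, ∀ a : ℤ, a.natAbs ≤ N → a ≠ 0 →
      ∃ e t : ℤ, 1 ≤ t ∧ a = e * t ^ k ∧ (∀ p : ℕ, p.Prime → ¬ ((p : ℤ) ^ k ∣ e)) ∧ e ∣ a := by
  intro N
  induction N with
  | zero => intro a h ha; exact absurd (Int.natAbs_eq_zero.mp (Nat.le_zero.mp h)) ha
  | succ N ih =>
    intro a hN ha
    by_cases hfree : ∀ p : ℕ, p.Prime → ¬ ((p : ℤ) ^ k ∣ a)
    · exact ⟨a, 1, le_rfl, by ring, hfree, dvd_rfl⟩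
    · push_neg at hfree
      obtain ⟨p, hp, hpk⟩ := hfree
      obtain ⟨a', rfl⟩ := hpk
      have hp2 : (2 : ℤ) ≤ (p : ℤ) := by exact_mod_cast hp.two_le
      have ha' : a' ≠ 0 := by rintro rfl; simp at ha
      have hlt : a'.natAbs ≤ N := by
        have h4 : (4 : ℕ) ≤ p ^ k := by
          calc (4 : ℕ) = 2 ^ 2 := by norm_num
          _ ≤ p ^ k := Nat.pow_le_pow_left hp.two_le k |>.trans' (Nat.pow_le_pow_right (by norm_num) hk)
        have : ((p : ℤ) ^ k * a').natAbs = p ^ k * a'.natAbs := by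
          rw [Int.natAbs_mul, Int.natAbs_pow]; simp
        rw [this] at hN
        nlinarith [Int.natAbs_pos.mpr ha', hN]
      obtain ⟨e, t, ht, heq, hfr, hdvd⟩ := ih a' hlt ha'
      refine ⟨e, (p : ℤ) * t, by nlinarith, by rw [heq]; ring, hfr, ?_⟩
      exact hdvd.trans (dvd_mul_left _ _) |>.trans (dvd_refl _)

/-- A-part decomposition -/
lemma apart_decomp (A : ℤ) (hA : A ≠ 0) :
    ∀ N : ℕ, ∀ u : ℤ, u.natAbs ≤ N → u ≠ 0 →
      ∃ a c : ℤ, u = a * c ∧ IsCoprime c A ∧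
        (∀ p : ℕ, p.Prime → (p : ℤ) ∣ a → (p : ℤ) ∣ A) ∧ c ∣ u := by
  intro N
  induction N with
  | zero => intro u h hu; exact absurd (Int.natAbs_eq_zero.mp (Nat.le_zero.mp h)) hu
  | succ N ih =>
    intro u hN hu
    by_cases hcop : IsCoprime u A
    · exact ⟨1, u, by ring, hcop, fun p hp hd => absurd (isUnit_of_dvd_one hd)
        (Nat.prime_iff_prime_int.mp hp).not_unit, dvd_rfl⟩
    · have hg : Int.gcd u A ≠ 1 := fun h => hcop (Int.isCoprime_iff_gcd_eq_one.mpr h)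
      obtain ⟨p, hp, hpd⟩ := Nat.exists_prime_and_dvd hg
      have hdu : (p : ℤ) ∣ u := (Int.natCast_dvd_natCast.mpr (hpd.trans (Nat.gcd_dvd_left _ _))).trans (Int.natAbs_dvd.mpr dvd_rfl)
      have hdA : (p : ℤ) ∣ A := (Int.natCast_dvd_natCast.mpr (hpd.trans (Nat.gcd_dvd_right _ _))).trans (Int.natAbs_dvd.mpr dvd_rfl)
      obtain ⟨u', rfl⟩ := hdu
      have hu' : u' ≠ 0 := by rintro rfl; simp at hu
      have hlt : u'.natAbs ≤ N := by
        have : ((p : ℤ) * u').natAbs = p * u'.natAbs := by rw [Int.natAbs_mul]; simp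
        rw [this] at hN
        nlinarith [Int.natAbs_pos.mpr hu', hp.two_le, hN]
      obtain ⟨a, c, heq, hc, hpr, hcd⟩ := ih u' hlt hu'
      refine ⟨(p : ℤ) * a, c, by rw [heq]; ring, hc, ?_, hcd.mul_left _⟩
      intro q hq hd
      have hqz := Nat.prime_iff_prime_int.mp hq
      rcases hqz.dvd_mul.mp hd with h | h
      · exact h.trans hdA
      · exact hpr q hq h

theorem lucas_power_class_rigidity
    (P Q : ℤ) (hQ : Q = 1 ∨ Q = -1)
    (U : ℕ → ℤ) (h0 : U 0 = 0) (h1 : U 1 = 1)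
    (hrec : ∀ n, U (n + 2) = P * U (n + 1) + Q * U n)
    (k : ℕ) (hk : 2 ≤ k)
    (A : ℤ) (hA : A ≠ 0)
    (r : ℕ) (n : Fin r → ℕ) (hpos : ∀ i, 0 < n i)
    (hcop : ∀ i j, i ≠ j → Nat.Coprime (n i) (n j))
    (hne : ∀ i, U (n i) ≠ 0)
    (y : ℤ) (heq : A * y ^ k = ∏ i, U (n i)) :
    ∀ i, ∃ e s : ℤ, 1 ≤ s ∧ U (n i) = e * s ^ k ∧
      (∀ p : ℕ, p.Prime → ¬ ((p : ℤ) ^ k ∣ e)) ∧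
      (∀ p : ℕ, p.Prime → (p : ℤ) ∣ e → (p : ℤ) ∣ A) := by
  intro i
  set u : ℤ := U (n i) with hu
  set R : ℤ := ∏ j ∈ Finset.univ.erase i, U (n j) with hR
  have hprod : A * y ^ k = u * R := by
    rw [heq, hR, hu]; exact (Finset.mul_prod_erase Finset.univ (fun j => U (n j)) (Finset.mem_univ i)).symm
  -- u coprime to R
  have hcopR : IsCoprime u R := by
    apply IsCoprime.prod_right
    intro j hj
    have hij : i ≠ j := fun h => (Finset.mem_erase.mp hj).1 h.symm
    exact lucas_coprime_vals P Q hQ U h0 h1 hrec (n i) (n j) (hpos i) (hpos j)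
      (hcop i j hij) (hne i)
  -- A-part decomposition of u
  obtain ⟨a, c, huac, hcA, hprA, hcdvd⟩ :=
    apart_decomp A hA u.natAbs u le_rfl (hne i)
  have hune : u ≠ 0 := hne i
  have hane : a ≠ 0 := fun h => hune (by rw [huac, h, zero_mul])
  have hcne : c ≠ 0 := fun h => hune (by rw [huac, h, mul_zero])
  have hcR : IsCoprime c R := hcopR.of_isCoprime_of_dvd_left hcdvd
  have hca : IsCoprime c a := by
    rw [Int.isCoprime_iff_gcd_eq_one]
    by_contra h
    obtain ⟨p, hp, hpd⟩ := Nat.exists_prime_and_dvd h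
    have hdc : (p : ℤ) ∣ c := (Int.natCast_dvd_natCast.mpr (hpd.trans (Nat.gcd_dvd_left _ _))).trans (Int.natAbs_dvd.mpr dvd_rfl)
    have hda : (p : ℤ) ∣ a := (Int.natCast_dvd_natCast.mpr (hpd.trans (Nat.gcd_dvd_right _ _))).trans (Int.natAbs_dvd.mpr dvd_rfl)
    have hdA : (p : ℤ) ∣ A := hprA p hp hda
    exact (Nat.prime_iff_prime_int.mp hp).not_unit (hcA.isUnit_of_dvd' hdc hdA)
  -- c * (A^(k-1) * (a * R)) = (A*y)^k
  have hpow : A ^ (k - 1) * A = A ^ k := by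
    rw [← pow_succ]; congr 1; omega
  have hkey : c * (A ^ (k - 1) * (a * R)) = (A * y) ^ k := by
    rw [mul_pow, ← hpow]
    calc c * (A ^ (k-1) * (a * R)) = A ^ (k-1) * (u * R) := by rw [huac]; ring
    _ = A ^ (k-1) * (A * y ^ k) := by rw [hprod]
    _ = A ^ (k-1) * A * y ^ k := by ring
  have hcrest : IsCoprime c (A ^ (k - 1) * (a * R)) :=
    (hcA.pow_right).mul_right (hca.mul_right hcR)
  obtain ⟨d, hd⟩ := exists_associated_pow_of_mul_eq_pow' hcrest hkey
  obtain ⟨v, hv⟩ := hd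
  -- hv : d ^ k * v = c
  have hdne : (d : ℤ) ≠ 0 := by
    rintro rfl
    rw [zero_pow (by omega), zero_mul] at hv
    exact hcne hv.symm
  -- k-free decomposition of a
  obtain ⟨e, t, ht, hat, hfr, hedvd⟩ := kfree_decomp k hk a.natAbs a le_rfl hane
  -- signs
  have hvpm : (v : ℤ) = 1 ∨ (v : ℤ) = -1 := Int.isUnit_iff.mp v.isUnit
  have habs : |d| ^ k = d ^ k ∨ |d| ^ k = -(d ^ k) := by
    rcases abs_choice d with h | h
    · left; rw [h]
    · rcases Nat.even_or_odd k with he | ho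
      · left; rw [h, he.neg_pow]
      · right; rw [h, ho.neg_pow]
  set s : ℤ := t * |d| with hs
  have hs1 : 1 ≤ s := by
    have : 1 ≤ |d| := by
      rcases lt_trichotomy d 0 with h | h | h
      · rw [abs_of_neg h]; omega
      · exact absurd h hdne
      · rw [abs_of_pos h]; omega
    nlinarith
  have hsk : s ^ k = t ^ k * |d| ^ k := mul_pow t |d| k
  -- u = (e * v * σ) * s^k  for appropriate sign
  have hufull : u = e * t ^ k * (d ^ k * (v : ℤ)) := by
    rw [huac, hat, ← hv]
  rcases habs with hab | hab
  · refine ⟨e * v, s, hs1, ?_, ?_, ?_⟩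
    · rw [hufull, hsk, hab]; ring
    · intro p hp hdvd
      apply hfr p hp
      rcases hvpm with h | h <;> rw [h] at hdvd
      · simpa using hdvd
      · have := hdvd.mul_right (-1); simpa using this
    · intro p hp hdvd
      apply hprA p hp
      have hpe : (p : ℤ) ∣ e := by
        rcases hvpm with h | h <;> rw [h] at hdvd
        · simpa using hdvd
        · have := hdvd.mul_right (-1); simpa using this
      exact hpe.trans hedvd
  · refine ⟨-(e * v), s, hs1, ?_, ?_, ?_⟩
    · rw [hufull, hsk, hab]; ring
    · intro p hp hdvd
      apply hfr p hp
      rw [dvd_neg] at hdvd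
      rcases hvpm with h | h <;> rw [h] at hdvd
      · simpa using hdvd
      · have := hdvd.mul_right (-1); simpa using this
    · intro p hp hdvd
      apply hprA p hp
      rw [dvd_neg] at hdvd
      have hpe : (p : ℤ) ∣ e := by
        rcases hvpm with h | h <;> rw [h] at hdvd
        · simpa using hdvd
        · have := hdvd.mul_right (-1); simpa using this
      exact hpe.trans hedvd
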